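/- Let L be a primitive Z_2-submodule of Z_2 ⊕ Z_2 containing a primitive vector u whose first coordinate is a 2-adic unit, and suppose the index of L in Z_2 ⊕ Z_2 has 2-adic valuation d < ∞. Then for each 0 ≤ i ≤ d, the submodule generated by u and (0, 2^i) is the unique primitive submodule of Z_2 ⊕ Z_2 containing L whose index has 2-adic valuation i. -/

import Mathlib

lemma span_char (u : ℤ_[2] × ℤ_[2]) (hu1 : IsUnit u.1) (c : ℤ_[2]) (w : ℤ_[2] × ℤ_[2]) :
    w ∈ Submodule.span ℤ_[2] {u, ((0 : ℤ_[2]), c)} ↔ c ∣ (w.2 * u.1 - w.1 * u.2) := by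
  rw [Submodule.mem_span_pair]
  have h1 : (↑hu1.unit⁻¹ : ℤ_[2]) * u.1 = 1 := hu1.val_inv_mul
  constructor
  · rintro ⟨a, b, rfl⟩
    refine ⟨b * u.1, ?_⟩
    simp [Prod.smul_def, Prod.add_def, smul_eq_mul]
    ring
  · rintro ⟨t, ht⟩
    refine ⟨w.1 * ↑hu1.unit⁻¹, t * ↑hu1.unit⁻¹, ?_⟩
    ext
    · simp [smul_eq_mul]
      linear_combination w.1 * h1
    · simp [smul_eq_mul]
      linear_combination (-(↑hu1.unit⁻¹ : ℤ_[2])) * ht + w.2 * h1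

lemma span_index (u : ℤ_[2] × ℤ_[2]) (hu1 : IsUnit u.1) (i : ℕ) :
    (Submodule.span ℤ_[2] {u, ((0 : ℤ_[2]), (2 : ℤ_[2]) ^ i)}).toAddSubgroup.index = 2 ^ i := by
  set f : (ℤ_[2] × ℤ_[2]) →+ ℤ_[2] :=
    { toFun := fun w => w.2 * u.1 - w.1 * u.2
      map_zero' := by simp
      map_add' := fun a b => by simp [Prod.fst_add, Prod.snd_add]; ring } with hf
  set g : (ℤ_[2] × ℤ_[2]) →+ ZMod (2 ^ i) :=
    ((PadicInt.toZModPow i).toAddMonoidHom.comp f) with hg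
  have happ : ∀ w : ℤ_[2] × ℤ_[2], g w = PadicInt.toZModPow i (w.2 * u.1 - w.1 * u.2) :=
    fun w => rfl
  have hker : g.ker = (Submodule.span ℤ_[2] {u, ((0 : ℤ_[2]), (2 : ℤ_[2]) ^ i)}).toAddSubgroup := by
    ext w
    rw [AddMonoidHom.mem_ker, happ w]
    have h2 : (PadicInt.toZModPow (p := 2) i (w.2 * u.1 - w.1 * u.2) = 0) ↔
        (w.2 * u.1 - w.1 * u.2) ∈ RingHom.ker (PadicInt.toZModPow (p := 2) i) := Iff.rfl
    rw [h2, PadicInt.ker_toZModPow, Ideal.mem_span_singleton]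
    rw [Submodule.mem_toAddSubgroup, span_char u hu1]
    norm_num
  have hsurj : Function.Surjective g := by
    intro z
    refine ⟨((0 : ℤ_[2]), (z.val : ℤ_[2]) * ↑hu1.unit⁻¹), ?_⟩
    have h1 : (↑hu1.unit⁻¹ : ℤ_[2]) * u.1 = 1 := hu1.val_inv_mul
    rw [happ]
    show PadicInt.toZModPow i ((z.val : ℤ_[2]) * (↑hu1.unit⁻¹ : ℤ_[2]) * u.1 - 0 * u.2) = z
    have hv : (z.val : ℤ_[2]) * (↑hu1.unit⁻¹ : ℤ_[2]) * u.1 - 0 * u.2 = (z.val : ℤ_[2]) := by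
      rw [mul_assoc, h1]; ring
    rw [hv, map_natCast, ZMod.natCast_val, ZMod.cast_id]
  rw [← hker, AddSubgroup.index_ker, AddMonoidHom.range_eq_top.mpr hsurj]
  have : Nat.card (⊤ : AddSubgroup (ZMod (2 ^ i))) = Nat.card (ZMod (2 ^ i)) :=
    Nat.card_congr AddSubgroup.topEquiv.toEquiv
  rw [this, Nat.card_zmod]

lemma key (M : Submodule ℤ_[2] (ℤ_[2] × ℤ_[2])) (u : ℤ_[2] × ℤ_[2]) (hu : u ∈ M)
    (hu1 : IsUnit u.1) (j : ℕ) (hM : M.toAddSubgroup.index = 2 ^ j) :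
    M = Submodule.span ℤ_[2] {u, ((0 : ℤ_[2]), (2 : ℤ_[2]) ^ j)} := by
  have h1 : (↑hu1.unit⁻¹ : ℤ_[2]) * u.1 = 1 := hu1.val_inv_mul
  have hFI : M.toAddSubgroup.FiniteIndex := ⟨by rw [hM]; positivity⟩
  have hpj : ((0 : ℤ_[2]), (2 : ℤ_[2]) ^ j) ∈ M := by
    have := AddSubgroup.nsmul_index_mem M.toAddSubgroup ((0 : ℤ_[2]), (1 : ℤ_[2]))
    rw [hM] at this
    have heq : (2 ^ j) • ((0 : ℤ_[2]), (1 : ℤ_[2])) = ((0 : ℤ_[2]), (2 : ℤ_[2]) ^ j) := by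
      ext <;> simp <;> push_cast <;> ring
    rwa [heq] at this
  set K : Submodule ℤ_[2] ℤ_[2] := M.comap (LinearMap.inr ℤ_[2] ℤ_[2] ℤ_[2]) with hK
  have hKmem : ∀ y : ℤ_[2], y ∈ K ↔ ((0 : ℤ_[2]), y) ∈ M := fun y => Iff.rfl
  obtain ⟨c, hc⟩ := (IsPrincipalIdealRing.principal K).principal
  rw [Ideal.submodule_span_eq] at hc
  have hcdvd : c ∣ (2 : ℤ_[2]) ^ j := by
    rw [← Ideal.mem_span_singleton, ← hc]
    exact (hKmem _).mpr hpj
  have hc0 : c ≠ 0 := by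
    rintro rfl
    exact (pow_ne_zero j (two_ne_zero' ℤ_[2])) (by simpa using hcdvd)
  obtain ⟨e, ε, hce⟩ : ∃ (e : ℕ) (ε : ℤ_[2]ˣ), c = (ε : ℤ_[2]) * (2 : ℤ_[2]) ^ e :=
    ⟨_, _, PadicInt.unitCoeff_spec hc0⟩
  have hassoc : Associated ((2 : ℤ_[2]) ^ e) c := ⟨ε, by rw [mul_comm]; exact hce.symm⟩
  have hchar : ∀ w : ℤ_[2] × ℤ_[2], w ∈ M ↔ (2 : ℤ_[2]) ^ e ∣ (w.2 * u.1 - w.1 * u.2) := by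
    intro w
    rw [hassoc.dvd_iff_dvd_left]
    constructor
    · intro hw
      have hsub : w - (w.1 * ↑hu1.unit⁻¹) • u ∈ M := M.sub_mem hw (M.smul_mem _ hu)
      have heq : w - (w.1 * ↑hu1.unit⁻¹) • u =
          ((0 : ℤ_[2]), w.2 - w.1 * ↑hu1.unit⁻¹ * u.2) := by
        ext
        · simp [smul_eq_mul]; linear_combination (-w.1) * h1
        · simp [smul_eq_mul]
      rw [heq, ← hKmem, hc, Ideal.mem_span_singleton] at hsub
      obtain ⟨t, ht⟩ := hsub
      refine ⟨t * u.1, ?_⟩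
      have : w.2 * u.1 - w.1 * u.2 = (w.2 - w.1 * ↑hu1.unit⁻¹ * u.2) * u.1 := by
        linear_combination (w.1 * u.2) * h1
      rw [this, ht]; ring
    · intro hw
      have : w ∈ Submodule.span ℤ_[2] {u, ((0 : ℤ_[2]), c)} := (span_char u hu1 c w).mpr hw
      refine Submodule.span_le.mpr ?_ this
      rintro x (rfl | rfl)
      · exact hu
      · exact (hKmem c).mp (hc ▸ Ideal.mem_span_singleton_self c)
  have hMeq : M = Submodule.span ℤ_[2] {u, ((0 : ℤ_[2]), (2 : ℤ_[2]) ^ e)} := by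
    ext w; rw [hchar w, span_char u hu1]
  have hej : e = j := by
    have := span_index u hu1 e
    rw [← hMeq, hM] at this
    exact Nat.pow_right_injective (le_refl 2) this.symm
  rwa [hej] at hMeq

def PrimVec (u : ℤ_[2] × ℤ_[2]) : Prop := IsUnit u.1 ∨ IsUnit u.2

def PrimSub (L : Submodule ℤ_[2] (ℤ_[2] × ℤ_[2])) : Prop := ∃ u ∈ L, PrimVec u

theorem stmt3 (L : Submodule ℤ_[2] (ℤ_[2] × ℤ_[2])) (u : ℤ_[2] × ℤ_[2])
    (hu : u ∈ L) (hu1 : IsUnit u.1) (d : ℕ)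
    (hd : L.toAddSubgroup.index = 2 ^ d)
    (i : ℕ) (hi : i ≤ d) :
    L ≤ Submodule.span ℤ_[2] {u, ((0 : ℤ_[2]), (2 : ℤ_[2]) ^ i)} ∧
    (Submodule.span ℤ_[2] {u, ((0 : ℤ_[2]), (2 : ℤ_[2]) ^ i)}).toAddSubgroup.index = 2 ^ i ∧
    PrimSub (Submodule.span ℤ_[2] {u, ((0 : ℤ_[2]), (2 : ℤ_[2]) ^ i)}) ∧
    ∀ M : Submodule ℤ_[2] (ℤ_[2] × ℤ_[2]), L ≤ M → PrimSub M →
      M.toAddSubgroup.index = 2 ^ i →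
      M = Submodule.span ℤ_[2] {u, ((0 : ℤ_[2]), (2 : ℤ_[2]) ^ i)} := by
  refine ⟨?_, span_index u hu1 i, ?_, ?_⟩
  · intro w hw
    rw [key L u hu hu1 d hd, span_char u hu1] at hw
    rw [span_char u hu1]
    exact dvd_trans (pow_dvd_pow (2 : ℤ_[2]) hi) hw
  · exact ⟨u, Submodule.subset_span (Set.mem_insert _ _), Or.inl hu1⟩
  · intro M hLM _ hMi
    exact key M u (hLM hu) hu1 i hMi
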